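/- If D is a decision tree for a node-weighted tree T=(V,E,ω) and T' is a subtree of T, then there exists a decision tree D' for T' (with ω restricted to V(T')) such that COST_ω(D') ≤ COST_ω(D). -/

import Mathlib

universe u


/-- A rooted tree with nodes labeled by `α`. -/
inductive RTree (α : Type u) : Type u where
  | node : α → List (RTree α) → RTree α

namespace RTree

variable {α : Type u}

/-- The label of the root node. -/
def root : RTree α → α
  | node q _ => q

/-- Membership of a label in a rooted tree. -/
inductive Mem (x : α) : RTree α → Prop
  | here (ts : List (RTree α)) : Mem x (.node x ts)
  | there {q : α} {ts : List (RTree α)} {t : RTree α} :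
      t ∈ ts → Mem x t → Mem x (.node q ts)

/-- The set of labels occurring in a rooted tree. -/
def vertSet (t : RTree α) : Set α := {x | Mem x t}

/-- `IsSubtreeOf s t` holds when `s` is a node-rooted subtree of `t`,
i.e. `s` consists of some node of `t` together with all of its descendants. -/
inductive IsSubtreeOf : RTree α → RTree α → Prop
  | refl (t : RTree α) : IsSubtreeOf t t
  | step {s t : RTree α} {q : α} {ts : List (RTree α)} :
      t ∈ ts → IsSubtreeOf s t → IsSubtreeOf s (.node q ts)

/-- The cost of a rooted tree w.r.t. node weights `ω`: the maximum, over all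
root-to-leaf paths `P`, of the sum of the weights of the nodes on `P`
(for positive weights). -/
noncomputable def cost (ω : α → ℝ) : RTree α → ℝ
  | node q ts => ω q + (ts.attach.map (fun t => cost ω t.1)).foldr max 0
decreasing_by
  have h := List.sizeOf_lt_of_mem t.2
  simp only [RTree.node.sizeOf_spec]
  omega

end RTree

variable {V : Type u}

/-- `w` is reachable from `u` by a walk of `G` whose support stays inside `A`. -/
def ReachIn (G : SimpleGraph V) (A : Set V) (u w : V) : Prop :=
  ∃ p : G.Walk u w, ∀ x ∈ p.support, x ∈ A

/-- The connected component of `u` inside the set `A`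
(w.r.t. the subgraph of `G` induced on `A`). -/
def compIn (G : SimpleGraph V) (A : Set V) (u : V) : Set V :=
  {w ∈ A | ReachIn G A u w}

/-- A nonempty vertex subset inducing a connected subgraph
(i.e. a subtree, when `G` is a tree). -/
def ConnectedIn (G : SimpleGraph V) (A : Set V) : Prop :=
  A.Nonempty ∧ ∀ u ∈ A, ∀ w ∈ A, ReachIn G A u w

/-- `IsDecTree G S D`: `D` is a decision tree for the subgraph of `G` induced on the
vertex set `S`: the root of `D` is some `q ∈ S`, and the subtrees of `D` rooted at the
children of `q` are decision trees for the connected components of the induced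
subgraph on `S` minus `q` (one subtree per component). -/
inductive IsDecTree (G : SimpleGraph V) : Set V → RTree V → Prop
  | mk (S : Set V) (q : V) (ts : List (RTree V))
      (hq : q ∈ S)
      (hsub : ∀ t ∈ ts, IsDecTree G (RTree.vertSet t) t)
      (hcomp : ∀ t ∈ ts, ∃ u ∈ S \ {q}, RTree.vertSet t = compIn G (S \ {q}) u)
      (hcover : ∀ u ∈ S \ {q}, ∃ t ∈ ts, u ∈ RTree.vertSet t)
      (hdisj : ts.Pairwise fun t t' => Disjoint (RTree.vertSet t) (RTree.vertSet t')) :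
      IsDecTree G S (.node q ts)

/-- `OPT(T)`: the minimum of `COST_ω(D)` over all decision trees `D` for `G`. -/
noncomputable def OPTval (G : SimpleGraph V) (ω : V → ℝ) : ℝ :=
  sInf {x | ∃ D : RTree V, IsDecTree G Set.univ D ∧ x = RTree.cost ω D}


lemma foldr_max_nonneg (l : List ℝ) : (0:ℝ) ≤ l.foldr max 0 := by
  induction l with
  | nil => simp
  | cons a l ih => exact le_max_of_le_right ih

lemma le_foldr_max {a : ℝ} {l : List ℝ} (h : a ∈ l) : a ≤ l.foldr max 0 := by
  induction l with
  | nil => simp at h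
  | cons b l ih =>
    rcases List.mem_cons.mp h with h | h
    · subst h; exact le_max_left _ _
    · exact le_max_of_le_right (ih h)

lemma foldr_max_le {l : List ℝ} {M : ℝ} (hM : 0 ≤ M) (h : ∀ a ∈ l, a ≤ M) :
    l.foldr max 0 ≤ M := by
  induction l with
  | nil => simpa
  | cons a l ih =>
    exact max_le (h a (by simp)) (ih fun a ha => h a (List.mem_cons_of_mem _ ha))

lemma cost_node (ω : V → ℝ) (q : V) (ts : List (RTree V)) :
    RTree.cost ω (.node q ts) = ω q + (ts.attach.map fun t => RTree.cost ω t.1).foldr max 0 := by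
  rw [RTree.cost]

lemma cost_mem (ω : V → ℝ) {t : RTree V} {ts : List (RTree V)} (h : t ∈ ts) :
    RTree.cost ω t ∈ ts.attach.map fun s => RTree.cost ω s.1 :=
  List.mem_map.mpr ⟨⟨t, h⟩, List.mem_attach _ _, rfl⟩

lemma ReachIn.refl' {G : SimpleGraph V} {A : Set V} {u : V} (hu : u ∈ A) : ReachIn G A u u :=
  ⟨SimpleGraph.Walk.nil, by simpa using hu⟩

lemma ReachIn.symm {G : SimpleGraph V} {A : Set V} {u w : V} (h : ReachIn G A u w) :
    ReachIn G A w u := by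
  obtain ⟨p, hp⟩ := h
  exact ⟨p.reverse, fun x hx => hp x (by simpa [SimpleGraph.Walk.support_reverse] using hx)⟩

lemma ReachIn.trans {G : SimpleGraph V} {A : Set V} {u v w : V}
    (h1 : ReachIn G A u v) (h2 : ReachIn G A v w) : ReachIn G A u w := by
  obtain ⟨p, hp⟩ := h1; obtain ⟨r, hr⟩ := h2
  refine ⟨p.append r, fun x hx => ?_⟩
  rcases (SimpleGraph.Walk.mem_support_append_iff _ _).mp hx with h | h
  · exact hp x h
  · exact hr x h

lemma ReachIn.mono {G : SimpleGraph V} {A B : Set V} (hAB : A ⊆ B) {u w : V}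
    (h : ReachIn G A u w) : ReachIn G B u w :=
  let ⟨p, hp⟩ := h; ⟨p, fun x hx => hAB (hp x hx)⟩

lemma compIn_subset {G : SimpleGraph V} {A : Set V} {u : V} : compIn G A u ⊆ A :=
  fun _ h => h.1

lemma mem_compIn_self {G : SimpleGraph V} {A : Set V} {u : V} (hu : u ∈ A) :
    u ∈ compIn G A u := ⟨hu, ReachIn.refl' hu⟩

lemma compIn_mono {G : SimpleGraph V} {A B : Set V} (h : A ⊆ B) (u : V) :
    compIn G A u ⊆ compIn G B u :=
  fun w hw => ⟨h hw.1, hw.2.mono h⟩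

lemma compIn_eq_of_mem {G : SimpleGraph V} {A : Set V} {u w : V} (hw : w ∈ compIn G A u) :
    compIn G A w = compIn G A u := by
  ext x
  exact ⟨fun hx => ⟨hx.1, hw.2.trans hx.2⟩, fun hx => ⟨hx.1, hw.2.symm.trans hx.2⟩⟩

lemma compIn_connected {G : SimpleGraph V} {A : Set V} {u : V} (hu : u ∈ A) :
    ConnectedIn G (compIn G A u) := by
  classical
  have key : ∀ w ∈ compIn G A u, ReachIn G (compIn G A u) u w := by
    intro w hw
    obtain ⟨p, hp⟩ := hw.2
    refine ⟨p, fun x hx => ?_⟩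
    exact ⟨hp x hx, ⟨p.takeUntil x hx,
      fun y hy => hp y (SimpleGraph.Walk.support_takeUntil_subset p hx hy)⟩⟩
  exact ⟨⟨u, mem_compIn_self hu⟩, fun w hw w' hw' => (key w hw).symm.trans (key w' hw')⟩

lemma compIn_eq_or_disjoint {G : SimpleGraph V} {A : Set V} {u w : V} :
    compIn G A u = compIn G A w ∨ Disjoint (compIn G A u) (compIn G A w) := by
  by_cases h : Disjoint (compIn G A u) (compIn G A w)
  · exact Or.inr h
  · obtain ⟨x, hxu, hxw⟩ := Set.not_disjoint_iff.mp h
    exact Or.inl (by rw [← compIn_eq_of_mem hxu, compIn_eq_of_mem hxw])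

lemma vertSet_node {q : V} {ts : List (RTree V)} :
    RTree.vertSet (RTree.node q ts) = {q} ∪ ⋃ t ∈ ts, RTree.vertSet t := by
  ext x
  constructor
  · intro h
    cases h with
    | here => exact Or.inl rfl
    | there ht hm => exact Or.inr (Set.mem_biUnion ht hm)
  · rintro (rfl | h)
    · exact RTree.Mem.here _
    · obtain ⟨t, ht, hm⟩ := Set.mem_iUnion₂.mp h
      exact RTree.Mem.there ht hm

lemma vertSet_eq {G : SimpleGraph V} {S : Set V} {D : RTree V} (h : IsDecTree G S D) :
    RTree.vertSet D = S := by
  cases h with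
  | mk S q ts hq hsub hcomp hcover hdisj =>
    rw [vertSet_node]
    ext x
    simp only [Set.mem_union, Set.mem_singleton_iff, Set.mem_iUnion, exists_prop]
    constructor
    · rintro (rfl | ⟨t, ht, hx⟩)
      · exact hq
      · obtain ⟨u, hu, hveq⟩ := hcomp t ht
        have hx' : x ∈ compIn G (S \ {q}) u := hveq ▸ hx
        exact (compIn_subset hx').1
    · intro hx
      by_cases hxq : x = q
      · exact Or.inl hxq
      · obtain ⟨t, ht, hxt⟩ := hcover x ⟨hx, hxq⟩
        exact Or.inr ⟨t, ht, hxt⟩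

lemma aux_main {V : Type u} [Fintype V] (G : SimpleGraph V) (ω : V → ℝ) (hω : ∀ v, 0 < ω v) :
    ∀ (n : ℕ) (D : RTree V), sizeOf D ≤ n → ∀ (A S : Set V), IsDecTree G A D →
      ConnectedIn G S → S ⊆ A →
      ∃ D' : RTree V, IsDecTree G S D' ∧ RTree.cost ω D' ≤ RTree.cost ω D := by
  classical
  intro n
  induction n with
  | zero =>
    rintro ⟨q, ts⟩ hsize
    simp only [RTree.node.sizeOf_spec] at hsize
    omega
  | succ n ih =>
    rintro ⟨q, ts⟩ hsize A S hD hS hSA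
    cases hD with
    | mk _ _ _ hq hsub hcomp hcover hdisj =>
    have hts : ∀ t ∈ ts, sizeOf t ≤ n := by
      intro t ht
      have h1 := List.sizeOf_lt_of_mem ht
      simp only [RTree.node.sizeOf_spec] at hsize
      omega
    have hM0 : (0:ℝ) ≤ (ts.attach.map fun t => RTree.cost ω t.1).foldr max 0 :=
      foldr_max_nonneg _
    by_cases hqS : q ∈ S
    · -- q ∈ S : recurse on components of S \ {q}
      have hSAq : S \ {q} ⊆ A \ {q} := fun x hx => ⟨hSA hx.1, hx.2⟩
      have key : ∀ C : Set V, ∃ D' : RTree V,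
          (∃ u ∈ S \ {q}, C = compIn G (S \ {q}) u) →
          IsDecTree G C D' ∧
            RTree.cost ω D' ≤ (ts.attach.map fun t => RTree.cost ω t.1).foldr max 0 := by
        intro C
        by_cases hC : ∃ u ∈ S \ {q}, C = compIn G (S \ {q}) u
        · obtain ⟨u, huB, rfl⟩ := hC
          obtain ⟨t, ht, hut⟩ := hcover u (hSAq huB)
          obtain ⟨u', hu', hveq⟩ := hcomp t ht
          have hut' : u ∈ compIn G (A \ {q}) u' := hveq ▸ hut
          have hsubset : compIn G (S \ {q}) u ⊆ RTree.vertSet t := by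
            rw [hveq, ← compIn_eq_of_mem hut']
            exact compIn_mono hSAq u
          obtain ⟨D', h1, h2⟩ := ih t (hts t ht) _ _ (hsub t ht) (compIn_connected huB) hsubset
          exact ⟨D', fun _ => ⟨h1, h2.trans (le_foldr_max (cost_mem ω ht))⟩⟩
        · exact ⟨.node q [], fun h => absurd h hC⟩
      choose f hf using key
      have hfin : {C : Set V | ∃ u ∈ S \ {q}, C = compIn G (S \ {q}) u}.Finite :=
        Set.toFinite _
      set L := hfin.toFinset.toList with hL
      have hLmem : ∀ C, C ∈ L ↔ ∃ u ∈ S \ {q}, C = compIn G (S \ {q}) u := by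
        intro C
        rw [hL, Finset.mem_toList, Set.Finite.mem_toFinset]
        rfl
      have hLnd : L.Nodup := Finset.nodup_toList _
      refine ⟨.node q (L.map f), ?_, ?_⟩
      · refine IsDecTree.mk S q (L.map f) hqS ?_ ?_ ?_ ?_
        · intro t htL
          obtain ⟨C, hC, rfl⟩ := List.mem_map.mp htL
          have h1 := (hf C ((hLmem C).mp hC)).1
          rwa [vertSet_eq h1]
        · intro t htL
          obtain ⟨C, hC, rfl⟩ := List.mem_map.mp htL
          obtain ⟨u, hu, hCu⟩ := (hLmem C).mp hC
          exact ⟨u, hu, by rw [vertSet_eq (hf C ((hLmem C).mp hC)).1, hCu]⟩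
        · intro u hu
          have hCL : compIn G (S \ {q}) u ∈ L := (hLmem _).mpr ⟨u, hu, rfl⟩
          refine ⟨f (compIn G (S \ {q}) u), List.mem_map_of_mem (f := f) hCL, ?_⟩
          rw [vertSet_eq (hf _ ((hLmem _).mp hCL)).1]
          exact mem_compIn_self hu
        · rw [List.pairwise_map]
          refine hLnd.imp_of_mem ?_
          intro C C' hC hC' hne
          obtain ⟨u, hu, hCu⟩ := (hLmem C).mp hC
          obtain ⟨u', hu', hCu'⟩ := (hLmem C').mp hC'
          rw [vertSet_eq (hf C ((hLmem C).mp hC)).1,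
            vertSet_eq (hf C' ((hLmem C').mp hC')).1, hCu, hCu']
          rcases compIn_eq_or_disjoint (G := G) (A := S \ {q}) (u := u) (w := u') with h | h
          · exact absurd (hCu.trans (h.trans hCu'.symm)) hne
          · exact h
      · rw [cost_node, cost_node]
        apply (add_le_add_iff_left _).mpr
        apply foldr_max_le hM0
        intro a ha
        obtain ⟨⟨t, htL⟩, _, rfl⟩ := List.mem_map.mp ha
        obtain ⟨C, hC, rfl⟩ := List.mem_map.mp htL
        exact (hf C ((hLmem C).mp hC)).2
    · -- q ∉ S : S lives inside one component
      obtain ⟨⟨u, huS⟩, hconn⟩ := hS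
      have hSAq : S ⊆ A \ {q} := fun x hx =>
        ⟨hSA hx, by intro h; rw [Set.mem_singleton_iff] at h; subst h; exact hqS hx⟩
      obtain ⟨t, ht, hut⟩ := hcover u (hSAq huS)
      obtain ⟨u', hu', hveq⟩ := hcomp t ht
      have hut' : u ∈ compIn G (A \ {q}) u' := hveq ▸ hut
      have hScomp : S ⊆ RTree.vertSet t := by
        rw [hveq]
        intro w hw
        exact ⟨hSAq hw, hut'.2.trans ((hconn u huS w hw).mono hSAq)⟩
      obtain ⟨D', hD', hcost⟩ := ih t (hts t ht) _ _ (hsub t ht) ⟨⟨u, huS⟩, hconn⟩ hScomp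
      refine ⟨D', hD', hcost.trans ?_⟩
      rw [cost_node]
      have h1 : RTree.cost ω t ≤ (ts.attach.map fun s => RTree.cost ω s.1).foldr max 0 :=
        le_foldr_max (cost_mem ω ht)
      linarith [hω q]

/-- If `D` is a decision tree for a node-weighted tree `T = (V,E,ω)`
and `T'` is a subtree of `T` (given by a nonempty connected vertex set `S`), then there
exists a decision tree `D'` for `T'` such that `COST_ω(D') ≤ COST_ω(D)`. -/
theorem stmt1 {V : Type u} [Fintype V] (G : SimpleGraph V) (hG : G.IsTree)
    (ω : V → ℝ) (hω : ∀ v, 0 < ω v)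
    (D : RTree V) (hD : IsDecTree G Set.univ D)
    (S : Set V) (hS : ConnectedIn G S) :
    ∃ D' : RTree V, IsDecTree G S D' ∧ RTree.cost ω D' ≤ RTree.cost ω D := by
  exact aux_main G ω hω (sizeOf D) D le_rfl Set.univ S hD hS (Set.subset_univ S)
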